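/- arXiv:1512.02978 — 7 statements merged into one kernel-verified Lean document; each statement's English description precedes it below -/
import Mathlib

section
/- For all nonnegative integers n, m with n ≥ 2m+2, the sum ∑_{j≥0} (C(n, m−3j) − C(n, m−3j−1)) equals ∑_{j=0}^{m} C(n−2j−2, m−j), where C(n,k)=0 for k<0. -/
/-- Binomial coefficient with the convention `C n k = 0` for `k < 0`. -/
def binom (n : ℕ) (k : ℤ) : ℕ := if k < 0 then 0 else n.choose k.toNat

lemma binom_neg (n : ℕ) {k : ℤ} (hk : k < 0) : binom n k = 0 := if_pos hk

lemma binom_ofNat (n k : ℕ) : binom n (k : ℤ) = n.choose k := by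
  simp [binom]

/-- Left-hand side sum. -/
def LS (n m : ℕ) : ℤ :=
  ∑ j ∈ Finset.range (m + 1),
      ((binom n ((m : ℤ) - 3 * j) : ℤ) - (binom n ((m : ℤ) - 3 * j - 1) : ℤ))

/-- Right-hand side sum (in ℕ). -/
def RN (n m : ℕ) : ℕ := ∑ j ∈ Finset.range (m + 1), (n - 2 * j - 2).choose (m - j)

/-- Reindexed right-hand side. -/
def G (e M : ℕ) : ℕ := ∑ i ∈ Finset.range (M + 1), (2 * i + e).choose i

lemma dpascal (a b : ℕ) :
    (a + 2).choose (b + 2) = a.choose b + 2 * a.choose (b + 1) + a.choose (b + 2) := by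
  show (a + 1 + 1).choose (b + 1 + 1) = _
  rw [Nat.choose_succ_succ (a + 1) (b + 1), Nat.choose_succ_succ a b,
    Nat.choose_succ_succ a (b + 1)]
  ring

lemma G3 (e m : ℕ) :
    G e (m + 2) + G (e + 2) (m + 1) + G (e + 4) m = (2 * m + 6 + e).choose (m + 2) := by
  induction m with
  | zero =>
    have hd := dpascal (e + 4) 0
    simp only [G, Finset.sum_range_succ, Finset.sum_range_one]
    have h0 : 2 * 0 + 6 + e = e + 4 + 2 := by omega
    have h1 : 2 * 1 + e = e + 2 := by omega
    have h2 : 2 * 2 + e = e + 4 := by omega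
    have h3 : 2 * 0 + e = e := by omega
    have h4 : 2 * 1 + (e + 2) = e + 4 := by omega
    have h5 : 2 * 0 + (e + 2) = e + 2 := by omega
    have h6 : 2 * 0 + (e + 4) = e + 4 := by omega
    rw [h0, h1, h2, h3, h4, h5, h6, hd]
    simp [Nat.choose_one_right]
    omega
  | succ k ih =>
    have hd := dpascal (2 * k + 6 + e) (k + 1)
    rw [show k + 1 + 1 = k + 2 from rfl, show k + 1 + 2 = k + 3 from rfl] at hd
    simp only [G, Finset.sum_range_succ] at ih ⊢
    have h1 : 2 * (k + 2 + 1) + e = 2 * k + 6 + e := by omega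
    have h2 : 2 * (k + 1 + 1) + (e + 2) = 2 * k + 6 + e := by omega
    have h3 : 2 * (k + 1) + (e + 4) = 2 * k + 6 + e := by omega
    have h4 : 2 * (k + 1) + 6 + e = 2 * k + 6 + e + 2 := by omega
    have h5 : k + 2 + 1 = k + 3 := by omega
    have h6 : k + 1 + 1 = k + 2 := by omega
    have h7 : k + 1 + 2 = k + 3 := by omega
    rw [h1, h2, h3, h4, h5, h6, h7, hd]
    omega

lemma RN_eq (n M : ℕ) (h : 2 * M + 2 ≤ n) : RN n M = G (n - 2 * M - 2) M := by
  rw [RN, G, ← Finset.sum_range_reflect (fun i => (2 * i + (n - 2 * M - 2)).choose i) (M + 1)]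
  apply Finset.sum_congr rfl
  intro j hj
  have hj' : j ≤ M := Nat.lt_succ_iff.mp (Finset.mem_range.mp hj)
  have h1 : M + 1 - 1 - j = M - j := by omega
  have h2 : n - 2 * j - 2 = 2 * (M - j) + (n - 2 * M - 2) := by omega
  simp only [h1, h2]

lemma R3 (n m : ℕ) (h : 2 * m + 6 ≤ n) :
    RN n (m + 2) + RN n (m + 1) + RN n m = n.choose (m + 2) := by
  rw [RN_eq n (m + 2) (by omega), RN_eq n (m + 1) (by omega), RN_eq n m (by omega)]
  have h1 : n - 2 * (m + 1) - 2 = (n - 2 * (m + 2) - 2) + 2 := by omega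
  have h2 : n - 2 * m - 2 = (n - 2 * (m + 2) - 2) + 4 := by omega
  rw [h1, h2, G3 (n - 2 * (m + 2) - 2) m]
  congr 1
  omega

lemma LS_ext (n m N : ℕ) (h : m + 1 ≤ N) :
    (∑ j ∈ Finset.range N,
      ((binom n ((m : ℤ) - 3 * j) : ℤ) - (binom n ((m : ℤ) - 3 * j - 1) : ℤ))) = LS n m := by
  rw [LS]
  symm
  apply Finset.sum_subset (Finset.range_subset_range.mpr h)
  intro x hx hnx
  have hx1 : m + 1 ≤ x := by
    simp only [Finset.mem_range] at hx hnx; omega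
  have hb1 : ((m : ℤ) - 3 * x) < 0 := by
    have : (m : ℤ) + 1 ≤ x := by exact_mod_cast hx1
    linarith
  rw [binom_neg n hb1, binom_neg n (by linarith : ((m : ℤ) - 3 * x - 1) < 0)]
  simp

lemma L3 (n m : ℕ) : LS n (m + 2) + LS n (m + 1) + LS n m = (n.choose (m + 2) : ℤ) := by
  rw [← LS_ext n (m + 2) (m + 3) (by omega), ← LS_ext n (m + 1) (m + 3) (by omega),
    ← LS_ext n m (m + 3) (by omega), ← Finset.sum_add_distrib, ← Finset.sum_add_distrib]
  have key : ∀ j : ℕ,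
      ((binom n (((m + 2 : ℕ) : ℤ) - 3 * j) : ℤ) - (binom n (((m + 2 : ℕ) : ℤ) - 3 * j - 1) : ℤ))
      + ((binom n (((m + 1 : ℕ) : ℤ) - 3 * j) : ℤ) - (binom n (((m + 1 : ℕ) : ℤ) - 3 * j - 1) : ℤ))
      + ((binom n ((m : ℤ) - 3 * j) : ℤ) - (binom n ((m : ℤ) - 3 * j - 1) : ℤ))
      = (fun i : ℕ => (binom n (((m + 2 : ℕ) : ℤ) - 3 * i) : ℤ)) j
        - (fun i : ℕ => (binom n (((m + 2 : ℕ) : ℤ) - 3 * i) : ℤ)) (j + 1) := by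
    intro j
    simp only []
    have c1 : (((m + 2 : ℕ) : ℤ) - 3 * j - 1) = (((m + 1 : ℕ) : ℤ) - 3 * j) := by push_cast; ring
    have c2 : (((m + 1 : ℕ) : ℤ) - 3 * j - 1) = ((m : ℤ) - 3 * j) := by push_cast; ring
    have c3 : (((m + 2 : ℕ) : ℤ) - 3 * ((j + 1 : ℕ) : ℤ)) = ((m : ℤ) - 3 * j - 1) := by
      push_cast; ring
    rw [c1, c2, c3]
    ring
  rw [Finset.sum_congr rfl (fun j _ => key j),
    Finset.sum_range_sub' (fun i : ℕ => (binom n (((m + 2 : ℕ) : ℤ) - 3 * i) : ℤ)) (m + 3)]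
  have e0 : (((m + 2 : ℕ) : ℤ) - 3 * ((0 : ℕ) : ℤ)) = ((m + 2 : ℕ) : ℤ) := by push_cast; ring
  have eneg : (((m + 2 : ℕ) : ℤ) - 3 * ((m + 3 : ℕ) : ℤ)) < 0 := by push_cast; linarith
  rw [e0, binom_ofNat, binom_neg n eneg]
  simp

theorem stmt_2 (n m : ℕ) (h : 2 * m + 2 ≤ n) :
    ∑ j ∈ Finset.range (m + 1),
      ((binom n ((m : ℤ) - 3 * j) : ℤ) - (binom n ((m : ℤ) - 3 * j - 1) : ℤ)) =
    ∑ j ∈ Finset.range (m + 1), ((n - 2 * j - 2).choose (m - j) : ℤ) := by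
  have main : ∀ m n : ℕ, 2 * m + 2 ≤ n → LS n m = (RN n m : ℤ) := by
    intro m
    induction m using Nat.strong_induction_on with
    | _ m ih =>
      obtain _ | _ | k := m
      · intro n hn
        simp [LS, RN, binom, Finset.sum_range_one]
      · intro n hn
        have h2 : ((n - 2 : ℕ) : ℤ) = (n : ℤ) - 2 := by omega
        simp [LS, RN, binom, Finset.sum_range_succ, Finset.sum_range_one]
        omega
      · intro n hn
        have hL := L3 n k
        have hR := R3 n k (by omega)
        have i1 := ih (k + 1) (by omega) n (by omega)
        have i2 := ih k (by omega) n (by omega)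
        have hRz : ((RN n (k + 2) : ℤ) + RN n (k + 1) + RN n k) = (n.choose (k + 2) : ℤ) := by
          exact_mod_cast congrArg (fun x : ℕ => (x : ℤ)) hR
        linarith
  have := main m n h
  rw [LS] at this
  rw [this, RN]
  push_cast
  rfl
end

section
/- For all nonnegative integers n, m with n ≥ 2m, ∑_{j=0}^{m} (C(2m, j) − C(2m, j−1)) · C(n−2m, m−j) = C(n, m) − C(n, m−1), where C(a,b)=0 for b<0. -/
lemma vand (a b k : ℕ) :
    ((a + b).choose k : ℤ) = ∑ j ∈ Finset.range (k + 1),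
      (a.choose j : ℤ) * (b.choose (k - j) : ℤ) := by
  rw [Nat.add_choose_eq, Finset.Nat.sum_antidiagonal_eq_sum_range_succ_mk]
  push_cast
  rfl

theorem stmt_3 (n m : ℕ) (h : 2 * m ≤ n) :
    ∑ j ∈ Finset.range (m + 1),
      (((2 * m).choose j : ℤ) - (binom (2 * m) ((j : ℤ) - 1) : ℤ)) *
        ((n - 2 * m).choose (m - j) : ℤ) =
    (n.choose m : ℤ) - (binom n ((m : ℤ) - 1) : ℤ) := by
  set N := n - 2 * m with hN
  have hn : 2 * m + N = n := by omega
  simp only [sub_mul, Finset.sum_sub_distrib]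
  have h1 : ∑ j ∈ Finset.range (m + 1),
      ((2 * m).choose j : ℤ) * (N.choose (m - j) : ℤ) = (n.choose m : ℤ) := by
    rw [← hn, vand]
  rw [h1]
  congr 1
  rcases m with _ | k
  · simp [binom]
  · rw [Finset.sum_range_succ']
    have h0 : (binom (2 * (k + 1)) (((0 : ℕ) : ℤ) - 1) : ℤ) = 0 := by
      simp [binom]
    have hb : ∀ i : ℕ, (binom (2 * (k + 1)) ((i + 1 : ℕ) : ℤ) - 1 : ℤ) = 0 → True := fun _ _ => trivial
    have hbn : (binom n (((k + 1 : ℕ) : ℤ) - 1) : ℤ) = (n.choose k : ℤ) := by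
      have : (((k + 1 : ℕ) : ℤ) - 1) = (k : ℤ) := by push_cast; ring
      rw [this]
      simp [binom]
    rw [hbn]
    have hstep : ∀ i ∈ Finset.range (k + 1),
        (binom (2 * (k + 1)) (((i + 1 : ℕ) : ℤ) - 1) : ℤ) * (N.choose (k + 1 - (i + 1)) : ℤ)
        = ((2 * (k + 1)).choose i : ℤ) * (N.choose (k - i) : ℤ) := by
      intro i _
      have : (((i + 1 : ℕ) : ℤ) - 1) = (i : ℤ) := by push_cast; ring
      rw [this]
      simp [binom]
    rw [Finset.sum_congr rfl hstep, h0]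
    rw [zero_mul, add_zero]
    have := vand (2 * (k + 1)) N k
    rw [← this]
    have : n.choose k = (2 * (k + 1) + N).choose k := by rw [hn]
    rw [this]
end

section
/- For m+1 ≤ n−m, the minimum width of a cutset in B_n(m, m+1) is at most C(n−1, m): there exists a cutset C ⊆ B_n(m, m+1) such that every antichain contained in C has size at most C(n−1, m). -/
open Finset

theorem stmt_7 (n m : ℕ) (h : m + 1 ≤ n - m) :
    ∃ C : Finset (Finset ℕ),
      (∀ A ∈ C, A ⊆ Finset.Icc 1 n ∧ m ≤ A.card ∧ A.card ≤ m + 1) ∧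
      -- C is a cutset: it meets every maximal chain A ⊂ B
      (∀ A B : Finset ℕ, A ⊆ Finset.Icc 1 n → B ⊆ Finset.Icc 1 n →
        A.card = m → B.card = m + 1 → A ⊆ B → A ∈ C ∨ B ∈ C) ∧
      -- every antichain contained in C has size at most C(n-1, m)
      (∀ S : Finset (Finset ℕ), S ⊆ C →
        IsAntichain (· ⊆ ·) (S : Set (Finset ℕ)) → S.card ≤ (n - 1).choose m) := by
  refine ⟨((Icc 2 n).powersetCard m) ∪
      (((Icc 1 n).powersetCard (m+1)).filter (fun B => 1 ∈ B)), ?_, ?_, ?_⟩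
  · intro A hA
    rcases mem_union.mp hA with hA | hA
    · rw [mem_powersetCard] at hA
      refine ⟨hA.1.trans (Icc_subset_Icc_left (by norm_num)), ?_, ?_⟩ <;> omega
    · rw [mem_filter, mem_powersetCard] at hA
      exact ⟨hA.1.1, by omega, by omega⟩
  · intro A B hA hB hcA hcB hAB
    by_cases h1 : 1 ∈ A
    · right
      exact mem_union_right _ (mem_filter.mpr ⟨mem_powersetCard.mpr ⟨hB, hcB⟩, hAB h1⟩)
    · left
      refine mem_union_left _ (mem_powersetCard.mpr ⟨?_, hcA⟩)
      intro x hx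
      have hx1 : x ∈ Icc 1 n := hA hx
      rw [mem_Icc] at hx1 ⊢
      have : x ≠ 1 := fun hc => h1 (hc ▸ hx)
      omega
  · intro S hS hanti
    have key : ∀ B ∈ S, B.erase 1 ∈ (Icc 2 n).powersetCard m := by
      intro B hB
      rcases mem_union.mp (hS hB) with hB' | hB'
      · rw [mem_powersetCard] at hB' ⊢
        have h1 : (1 : ℕ) ∉ B := fun hc => by
          have := hB'.1 hc; rw [mem_Icc] at this; omega
        rw [erase_eq_of_notMem h1]; exact hB'
      · rw [mem_filter, mem_powersetCard] at hB'
        rw [mem_powersetCard]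
        constructor
        · intro x hx
          have hx1 : x ≠ 1 := (mem_erase.mp hx).1
          have := hB'.1.1 (mem_of_mem_erase hx)
          rw [mem_Icc] at this ⊢; omega
        · rw [card_erase_of_mem hB'.2, hB'.1.2]
          omega
    have hinj : Set.InjOn (fun B : Finset ℕ => B.erase 1) (S : Set (Finset ℕ)) := by
      intro B₁ h₁ B₂ h₂ heq
      simp only at heq
      by_contra hne
      by_cases c₁ : 1 ∈ B₁ <;> by_cases c₂ : 1 ∈ B₂
      · exact hne (by rw [← insert_erase c₁, ← insert_erase c₂, heq])
      · exact hanti h₂ h₁ (Ne.symm hne)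
          (by rw [← erase_eq_of_notMem c₂, ← heq]; exact erase_subset _ _)
      · exact hanti h₁ h₂ hne
          (by rw [← erase_eq_of_notMem c₁, heq]; exact erase_subset _ _)
      · exact hne (by rw [← erase_eq_of_notMem c₁, ← erase_eq_of_notMem c₂, heq])
    calc S.card ≤ ((Icc 2 n).powersetCard m).card :=
          card_le_card_of_injOn _ key hinj
      _ = (n-1).choose m := by
          rw [card_powersetCard, Nat.card_Icc]
          congr 1
end

section
/- For n ≥ 2m+2, the minimum width of a cutset in B_n(m, m+2) is at most C(n−2, m) plus the minimum width of a cutset in B_{n−2}(m−1, m+1). -/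
open Finset
open scoped Classical

/-- The truncated Boolean lattice `B_n(m,l)`: subsets of `[n] = {1,...,n}`
of size at least `m` and at most `l`. -/
def truncBool (n m l : ℕ) : Finset (Finset ℕ) :=
  (Finset.Icc 1 n).powerset.filter (fun A => m ≤ A.card ∧ A.card ≤ l)

/-- `C` is a cutset of `B_n(m,l)`: it is contained in `B_n(m,l)` and meets every
saturated (maximal) chain `A_m ⊂ A_{m+1} ⊂ ⋯ ⊂ A_l` with `|A_i| = i`. -/
def IsCutset (n m l : ℕ) (C : Finset (Finset ℕ)) : Prop :=
  C ⊆ truncBool n m l ∧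
  ∀ f : ℕ → Finset ℕ,
    (∀ i, m ≤ i → i ≤ l → f i ⊆ Finset.Icc 1 n ∧ (f i).card = i) →
    (∀ i, m ≤ i → i < l → f i ⊆ f (i + 1)) →
    ∃ i, m ≤ i ∧ i ≤ l ∧ f i ∈ C

/-- The width of a family of sets: the maximum size of an antichain contained in it. -/
noncomputable def widthF (C : Finset (Finset ℕ)) : ℕ :=
  (C.powerset.filter (fun S : Finset (Finset ℕ) => IsAntichain (· ⊆ ·) (S : Set (Finset ℕ)))).sup
    Finset.card

/-- `hFun n m l` is the minimum width of a cutset in `B_n(m,l)`. -/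
noncomputable def hFun (n m l : ℕ) : ℕ :=
  sInf {w | ∃ C : Finset (Finset ℕ), IsCutset n m l C ∧ widthF C = w}

lemma mem_truncBool' {n m l : ℕ} {A : Finset ℕ} :
    A ∈ truncBool n m l ↔ A ⊆ Finset.Icc 1 n ∧ m ≤ A.card ∧ A.card ≤ l := by
  simp [truncBool, Finset.mem_filter, Finset.mem_powerset, and_assoc]

lemma widthF_le {C : Finset (Finset ℕ)} {K : ℕ}
    (h : ∀ S ⊆ C, IsAntichain (· ⊆ ·) (S : Set (Finset ℕ)) → S.card ≤ K) :
    widthF C ≤ K := by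
  unfold widthF
  apply Finset.sup_le
  intro S hS
  rw [Finset.mem_filter, Finset.mem_powerset] at hS
  exact h S hS.1 hS.2

lemma le_widthF {C S : Finset (Finset ℕ)} (h1 : S ⊆ C)
    (h2 : IsAntichain (· ⊆ ·) (S : Set (Finset ℕ))) : S.card ≤ widthF C := by
  unfold widthF
  exact Finset.le_sup (Finset.mem_filter.mpr ⟨Finset.mem_powerset.mpr h1, h2⟩)

theorem stmt_8 (n m : ℕ) (h : 2 * m + 2 ≤ n) :
    hFun n m (m + 2) ≤ (n - 2).choose m + hFun (n - 2) (m - 1) (m + 1) := by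
  have hn2 : 2 ≤ n := by omega
  -- get an optimal cutset D for B_{n-2}(m-1, m+1)
  have hne : {w | ∃ C : Finset (Finset ℕ),
      IsCutset (n-2) (m-1) (m+1) C ∧ widthF C = w}.Nonempty := by
    refine ⟨widthF (truncBool (n-2) (m-1) (m+1)), truncBool (n-2) (m-1) (m+1),
      ⟨Finset.Subset.rfl, ?_⟩, rfl⟩
    intro f hf _
    refine ⟨m-1, le_rfl, by omega, ?_⟩
    obtain ⟨h1, h2⟩ := hf (m-1) le_rfl (by omega)
    exact mem_truncBool'.mpr ⟨h1, by omega⟩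
  obtain ⟨D, hD, hDw⟩ := Nat.sInf_mem hne
  -- the construction
  set F : Finset (Finset ℕ) := Finset.powersetCard m (Finset.Icc 1 (n-2)) with hF
  set Y1 : Finset (Finset ℕ) := F.image (insert (n-1)) with hY1
  set Y2 : Finset (Finset ℕ) := F.image (fun g => insert n (insert (n-1) g)) with hY2
  set CN : Finset (Finset ℕ) := D.image (insert n) with hCN
  set X : Finset (Finset ℕ) := F ∪ Y1 ∪ Y2 with hX
  set C : Finset (Finset ℕ) := X ∪ CN with hC
  have hFmem : ∀ g ∈ F, g ⊆ Finset.Icc 1 (n-2) ∧ g.card = m := by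
    intro g hg
    exact Finset.mem_powersetCard.mp hg
  have hnot : ∀ g : Finset ℕ, g ⊆ Finset.Icc 1 (n-2) → (n-1) ∉ g ∧ n ∉ g := by
    intro g hg
    constructor <;> intro hmem <;> (have := Finset.mem_Icc.mp (hg hmem); omega)
  -- D is inside truncBool (n-2) (m-1) (m+1)
  have hDmem : ∀ g ∈ D, g ⊆ Finset.Icc 1 (n-2) ∧ m - 1 ≤ g.card ∧ g.card ≤ m + 1 := by
    intro g hg
    exact mem_truncBool'.mp (hD.1 hg)
  -- C is a cutset
  have hcut : IsCutset n m (m+2) C := by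
    constructor
    · -- subset of truncBool
      intro A hA
      rw [hC, hX] at hA
      rw [mem_truncBool']
      have hIcc : Finset.Icc 1 (n-2) ⊆ Finset.Icc 1 n :=
        Finset.Icc_subset_Icc_right (by omega)
      rcases Finset.mem_union.mp hA with hA | hA
      · rcases Finset.mem_union.mp hA with hA | hA
        · rcases Finset.mem_union.mp hA with hA | hA
          · obtain ⟨h1, h2⟩ := hFmem A hA
            exact ⟨h1.trans hIcc, by omega, by omega⟩
          · obtain ⟨g, hg, rfl⟩ := Finset.mem_image.mp hA
            obtain ⟨h1, h2⟩ := hFmem g hg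
            obtain ⟨hn1g, hng⟩ := hnot g h1
            refine ⟨Finset.insert_subset (Finset.mem_Icc.mpr (by omega)) (h1.trans hIcc), ?_, ?_⟩ <;>
              rw [Finset.card_insert_of_notMem hn1g] <;> omega
        · obtain ⟨g, hg, rfl⟩ := Finset.mem_image.mp hA
          obtain ⟨h1, h2⟩ := hFmem g hg
          obtain ⟨hn1g, hng⟩ := hnot g h1
          have hn' : n ∉ insert (n-1) g := by
            rw [Finset.mem_insert]
            push_neg
            exact ⟨by omega, hng⟩
          refine ⟨?_, ?_, ?_⟩
          · exact Finset.insert_subset (Finset.mem_Icc.mpr (by omega))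
              (Finset.insert_subset (Finset.mem_Icc.mpr (by omega)) (h1.trans hIcc))
          · rw [Finset.card_insert_of_notMem hn', Finset.card_insert_of_notMem hn1g]; omega
          · rw [Finset.card_insert_of_notMem hn', Finset.card_insert_of_notMem hn1g]; omega
      · obtain ⟨g, hg, rfl⟩ := Finset.mem_image.mp hA
        obtain ⟨h1, h2, h3⟩ := hDmem g hg
        obtain ⟨hn1g, hng⟩ := hnot g h1
        refine ⟨Finset.insert_subset (Finset.mem_Icc.mpr (by omega)) (h1.trans hIcc), ?_, ?_⟩ <;>
          rw [Finset.card_insert_of_notMem hng] <;> omega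
    · -- meets every saturated chain
      intro f hf hfc
      have hm01 : f m ⊆ f (m+1) := hfc m le_rfl (by omega)
      have hm12 : f (m+1) ⊆ f (m+2) := hfc (m+1) (by omega) (by omega)
      obtain ⟨hfm_sub, hfm_card⟩ := hf m le_rfl (by omega)
      obtain ⟨hf1_sub, hf1_card⟩ := hf (m+1) (by omega) (by omega)
      obtain ⟨hf2_sub, hf2_card⟩ := hf (m+2) (by omega) (by omega)
      by_cases h1 : (n-1) ∉ f m ∧ n ∉ f m
      · -- f m ∈ F
        refine ⟨m, le_rfl, by omega, ?_⟩
        have hfmF : f m ∈ F := by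
          rw [hF, Finset.mem_powersetCard]
          refine ⟨?_, hfm_card⟩
          intro x hx
          have hxn : x ∈ Finset.Icc 1 n := hfm_sub hx
          rw [Finset.mem_Icc] at hxn ⊢
          have hx1 : x ≠ n - 1 := fun he => h1.1 (he ▸ hx)
          have hx2 : x ≠ n := fun he => h1.2 (he ▸ hx)
          omega
        rw [hC, hX]
        exact Finset.mem_union_left _ (Finset.mem_union_left _ (Finset.mem_union_left _ hfmF))
      by_cases h2 : (n-1) ∈ f (m+1) ∧ n ∉ f (m+1)
      · -- f (m+1) ∈ Y1
        refine ⟨m+1, by omega, by omega, ?_⟩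
        have hgF : (f (m+1)).erase (n-1) ∈ F := by
          rw [hF, Finset.mem_powersetCard]
          constructor
          · intro x hx
            rw [Finset.mem_erase] at hx
            have hxn : x ∈ Finset.Icc 1 n := hf1_sub hx.2
            rw [Finset.mem_Icc] at hxn ⊢
            have hx2 : x ≠ n := fun he => h2.2 (he ▸ hx.2)
            have hx1 : x ≠ n - 1 := hx.1
            omega
          · rw [Finset.card_erase_of_mem h2.1, hf1_card]; omega
        have : f (m+1) ∈ Y1 :=
          Finset.mem_image.mpr ⟨_, hgF, Finset.insert_erase h2.1⟩
        rw [hC, hX]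
        exact Finset.mem_union_left _ (Finset.mem_union_left _ (Finset.mem_union_right _ this))
      by_cases h3 : (n-1) ∈ f (m+2) ∧ n ∈ f (m+2)
      · -- f (m+2) ∈ Y2
        refine ⟨m+2, by omega, le_rfl, ?_⟩
        have hg1 : (n-1) ∈ (f (m+2)).erase n := Finset.mem_erase.mpr ⟨by omega, h3.1⟩
        have hgF : ((f (m+2)).erase n).erase (n-1) ∈ F := by
          rw [hF, Finset.mem_powersetCard]
          constructor
          · intro x hx
            rw [Finset.mem_erase, Finset.mem_erase] at hx
            have hxn : x ∈ Finset.Icc 1 n := hf2_sub hx.2.2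
            rw [Finset.mem_Icc] at hxn ⊢
            have hx1 : x ≠ n - 1 := hx.1
            have hx2 : x ≠ n := hx.2.1
            omega
          · rw [Finset.card_erase_of_mem hg1, Finset.card_erase_of_mem h3.2, hf2_card]; omega
        have hrec : insert n (insert (n-1) (((f (m+2)).erase n).erase (n-1))) = f (m+2) := by
          rw [Finset.insert_erase hg1, Finset.insert_erase h3.2]
        have : f (m+2) ∈ Y2 := Finset.mem_image.mpr ⟨_, hgF, hrec⟩
        rw [hC, hX]
        exact Finset.mem_union_left _ (Finset.mem_union_right _ this)
      · -- the remaining case: trace is ({n},{n},{n}); use D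
        push_neg at h1 h2 h3
        have hnm : n ∈ f m := by
          by_cases hx : (n-1) ∈ f m
          · exact absurd (hm12 (h2 (hm01 hx))) (h3 (hm12 (hm01 hx)))
          · exact h1 hx
        have hn1f2 : (n-1) ∉ f (m+2) := fun hc => h3 hc (hm12 (hm01 hnm))
        have hm1 : 1 ≤ m := by
          by_contra hm0
          have : m = 0 := by omega
          rw [this] at hfm_card hnm
          rw [Finset.card_eq_zero.mp hfm_card] at hnm
          exact absurd hnm (Finset.notMem_empty n)
        have hmonoS : ∀ j, m ≤ j → j ≤ m + 2 → f m ⊆ f j := by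
          intro j hj1 hj2
          rcases (by omega : j = m ∨ j = m+1 ∨ j = m+2) with rfl | rfl | rfl
          · exact Finset.Subset.rfl
          · exact hm01
          · exact hm01.trans hm12
        have hmonoT : ∀ j, m ≤ j → j ≤ m + 2 → f j ⊆ f (m+2) := by
          intro j hj1 hj2
          rcases (by omega : j = m ∨ j = m+1 ∨ j = m+2) with rfl | rfl | rfl
          · exact hm01.trans hm12
          · exact hm12
          · exact Finset.Subset.rfl
        obtain ⟨i, hi1, hi2, hiD⟩ := hD.2 (fun i => (f (i+1)).erase n)
          (by
            intro i hia hib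
            obtain ⟨hfi_sub, hfi_card⟩ := hf (i+1) (by omega) (by omega)
            have hsub1 : f (i+1) ⊆ f (m+2) := hmonoT (i+1) (by omega) (by omega)
            have hni : n ∈ f (i+1) := hmonoS (i+1) (by omega) (by omega) hnm
            constructor
            · intro x hx
              rw [Finset.mem_erase] at hx
              have hxn := Finset.mem_Icc.mp (hfi_sub hx.2)
              have hxn1 : x ≠ n - 1 := fun he => hn1f2 (he ▸ hsub1 hx.2)
              have hxn2 : x ≠ n := hx.1
              exact Finset.mem_Icc.mpr ⟨hxn.1, by omega⟩
            · rw [Finset.card_erase_of_mem hni, hfi_card]; omega)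
          (by
            intro i hia hib
            exact Finset.erase_subset_erase _ (hfc (i+1) (by omega) (by omega)))
        have hni : n ∈ f (i+1) := hmonoS (i+1) (by omega) (by omega) hnm
        refine ⟨i+1, by omega, by omega, ?_⟩
        have : f (i+1) ∈ CN := Finset.mem_image.mpr ⟨_, hiD, Finset.insert_erase hni⟩
        rw [hC]
        exact Finset.mem_union_right _ this
  -- width bound
  have hwidth : widthF C ≤ (n-2).choose m + widthF D := by
    apply widthF_le
    intro S hSC hanti
    have hsplit : (S ∩ X).card + (S \ X).card = S.card := Finset.card_inter_add_card_sdiff S X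
    rw [← hsplit]
    have habs : ∀ P Q : Finset ℕ, P ∈ S → Q ∈ S → P ⊆ Q → P = Q := by
      intro P Q hP hQ hPQ
      by_contra hne'
      exact hanti hP hQ hne' hPQ
    have hb1 : (S ∩ X).card ≤ (n-2).choose m := by
      have hform : ∀ A ∈ S ∩ X, ((A.erase n).erase (n-1)) ∈ F ∧
          (A = (A.erase n).erase (n-1) ∨ A = insert (n-1) ((A.erase n).erase (n-1)) ∨
            A = insert n (insert (n-1) ((A.erase n).erase (n-1)))) := by
        intro A hA
        have hAX : A ∈ X := (Finset.mem_inter.mp hA).2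
        rw [hX] at hAX
        rcases Finset.mem_union.mp hAX with hA' | hA'
        · rcases Finset.mem_union.mp hA' with hA' | hA'
          · obtain ⟨hsub, hcard⟩ := hFmem A hA'
            obtain ⟨hn1, hn0⟩ := hnot A hsub
            rw [Finset.erase_eq_of_notMem hn0, Finset.erase_eq_of_notMem hn1]
            exact ⟨hA', Or.inl rfl⟩
          · obtain ⟨g, hg, rfl⟩ := Finset.mem_image.mp hA'
            obtain ⟨hsub, hcard⟩ := hFmem g hg
            obtain ⟨hn1, hn0⟩ := hnot g hsub
            have hnins : n ∉ insert (n-1) g := by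
              rw [Finset.mem_insert]; push_neg; exact ⟨by omega, hn0⟩
            rw [Finset.erase_eq_of_notMem hnins, Finset.erase_insert hn1]
            exact ⟨hg, Or.inr (Or.inl rfl)⟩
        · obtain ⟨g, hg, rfl⟩ := Finset.mem_image.mp hA'
          obtain ⟨hsub, hcard⟩ := hFmem g hg
          obtain ⟨hn1, hn0⟩ := hnot g hsub
          have hnins : n ∉ insert (n-1) g := by
            rw [Finset.mem_insert]; push_neg; exact ⟨by omega, hn0⟩
          rw [Finset.erase_insert hnins, Finset.erase_insert hn1]
          exact ⟨hg, Or.inr (Or.inr rfl)⟩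
      have hinj : Set.InjOn (fun A : Finset ℕ => (A.erase n).erase (n-1)) ↑(S ∩ X) := by
        intro A hA B hB heq
        simp only [Finset.mem_coe] at hA hB
        obtain ⟨_, hAf⟩ := hform A hA
        obtain ⟨_, hBf⟩ := hform B hB
        simp only at heq
        rw [heq] at hAf
        have hAS : A ∈ S := (Finset.mem_inter.mp hA).1
        have hBS : B ∈ S := (Finset.mem_inter.mp hB).1
        obtain ⟨g, hAf, hBf⟩ : ∃ g : Finset ℕ,
            (A = g ∨ A = insert (n-1) g ∨ A = insert n (insert (n-1) g)) ∧
            (B = g ∨ B = insert (n-1) g ∨ B = insert n (insert (n-1) g)) :=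
          ⟨(B.erase n).erase (n-1), hAf, hBf⟩
        rcases hAf with rfl | rfl | rfl <;> rcases hBf with rfl | rfl | rfl <;>
          first
          | rfl
          | (exact habs _ _ hAS hBS (Finset.subset_insert _ _))
          | (exact (habs _ _ hBS hAS (Finset.subset_insert _ _)).symm)
          | (exact habs _ _ hAS hBS
              ((Finset.subset_insert _ _).trans (Finset.subset_insert _ _)))
          | (exact (habs _ _ hBS hAS
              ((Finset.subset_insert _ _).trans (Finset.subset_insert _ _))).symm)
      calc (S ∩ X).card
          = ((S ∩ X).image (fun A => (A.erase n).erase (n-1))).card :=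
            (Finset.card_image_of_injOn hinj).symm
        _ ≤ F.card := by
            apply Finset.card_le_card
            intro B hB
            obtain ⟨A, hA, rfl⟩ := Finset.mem_image.mp hB
            exact (hform A hA).1
        _ = (n-2).choose m := by
            rw [hF, Finset.card_powersetCard, Nat.card_Icc, Nat.add_sub_cancel]
    have hb2 : (S \ X).card ≤ widthF D := by
      have hsub : S \ X ⊆ CN := by
        intro A hA
        rw [Finset.mem_sdiff] at hA
        have : A ∈ C := hSC hA.1
        rw [hC] at this
        rcases Finset.mem_union.mp this with h' | h'
        · exact absurd h' hA.2
        · exact h'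
      have hformN : ∀ A ∈ S \ X, n ∈ A ∧ A.erase n ∈ D := by
        intro A hA
        obtain ⟨g, hg, rfl⟩ := Finset.mem_image.mp (hsub hA)
        have hn0 : n ∉ g := (hnot g (hDmem g hg).1).2
        rw [Finset.erase_insert hn0]
        exact ⟨Finset.mem_insert_self _ _, hg⟩
      have hinj : Set.InjOn (fun A : Finset ℕ => A.erase n) ↑(S \ X) := by
        intro A hA B hB heq
        simp only [Finset.mem_coe] at hA hB
        have hnA := (hformN A hA).1
        have hnB := (hformN B hB).1
        simp only at heq
        rw [← Finset.insert_erase hnA, ← Finset.insert_erase hnB, heq]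
      have hcard : ((S \ X).image (fun A => A.erase n)).card = (S \ X).card :=
        Finset.card_image_of_injOn hinj
      have hTD : (S \ X).image (fun A => A.erase n) ⊆ D := by
        intro B hB
        obtain ⟨A, hA, rfl⟩ := Finset.mem_image.mp hB
        exact (hformN A hA).2
      have hTanti : IsAntichain (· ⊆ ·)
          (((S \ X).image (fun A => A.erase n)) : Set (Finset ℕ)) := by
        intro a ha b hb hne' hab
        simp only [Finset.coe_image, Set.mem_image, Finset.mem_coe] at ha hb
        obtain ⟨A, hA, rfl⟩ := ha
        obtain ⟨B, hB, rfl⟩ := hb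
        have hnA := (hformN A hA).1
        have hnB := (hformN B hB).1
        have hABne : A ≠ B := fun he => hne' (by rw [he])
        have hASub : A ⊆ B := by
          rw [← Finset.insert_erase hnA, ← Finset.insert_erase hnB]
          exact Finset.insert_subset_insert _ hab
        have hAS : A ∈ S := (Finset.mem_sdiff.mp hA).1
        have hBS : B ∈ S := (Finset.mem_sdiff.mp hB).1
        exact hanti hAS hBS hABne hASub
      calc (S \ X).card = ((S \ X).image (fun A => A.erase n)).card := hcard.symm
        _ ≤ widthF D := le_widthF hTD hTanti
    omega
  -- conclude
  have hmem : widthF C ∈ {w | ∃ C' : Finset (Finset ℕ),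
      IsCutset n m (m+2) C' ∧ widthF C' = w} := ⟨C, hcut, rfl⟩
  calc hFun n m (m+2) ≤ widthF C := Nat.sInf_le hmem
    _ ≤ (n-2).choose m + widthF D := hwidth
    _ = (n-2).choose m + hFun (n-2) (m-1) (m+1) := by rw [hDw]; rfl
end

section
/- For n ≥ 2m+2, h_n(m, m+2) ≤ ∑_{j=0}^{m} C(n−2j−2, m−j), where h_n(m,l) is the minimum width of a cutset in the truncated Boolean lattice B_n(m,l). -/
open Finset
open scoped Classical

/-- Recursive construction of a small-width cutset of the levels `m..m+2` of the
Boolean lattice on the ground set `Icc (2k+1) n`. -/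
noncomputable def cutAux : ℕ → ℕ → ℕ → Finset (Finset ℕ)
  | 0, _, _ => {∅}
  | (m+1), n, k =>
    (Finset.Icc (2*k+3) n).powersetCard (m+1) ∪
    ((Finset.Icc (2*k+1) n).powersetCard (m+2)).filter
      (fun A => 2*k+1 ∈ A ∧ 2*k+2 ∉ A) ∪
    ((Finset.Icc (2*k+1) n).powersetCard (m+3)).filter
      (fun A => 2*k+1 ∈ A ∧ 2*k+2 ∈ A) ∪
    (cutAux m n (k+1)).image (insert (2*k+2))

lemma widthF_le_of {C : Finset (Finset ℕ)} {w : ℕ}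
    (h : ∀ T ⊆ C, IsAntichain (· ⊆ ·) (T : Set (Finset ℕ)) → T.card ≤ w) :
    widthF C ≤ w := by
  apply Finset.sup_le
  intro T hT
  simp only [mem_filter, mem_powerset] at hT
  exact h T hT.1 hT.2

lemma le_widthF_s9 {C T : Finset (Finset ℕ)} (hT : T ⊆ C)
    (hA : IsAntichain (· ⊆ ·) (T : Set (Finset ℕ))) : T.card ≤ widthF C :=
  Finset.le_sup (by simp only [mem_filter, mem_powerset]; exact ⟨hT, hA⟩)

lemma cutAux_mem_bounds : ∀ m k n, 2*k + 2*m + 2 ≤ n →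
    ∀ A ∈ cutAux m n k, A ⊆ Finset.Icc (2*k+1) n ∧ m ≤ A.card ∧ A.card ≤ m + 2 := by
  intro m
  induction m with
  | zero =>
    intro k n _ A hA
    simp only [cutAux, mem_singleton] at hA
    subst hA
    simp
  | succ m ih =>
    intro k n hn A hA
    simp only [cutAux, mem_union] at hA
    rcases hA with ((h0 | h1) | h2) | hr
    · rw [mem_powersetCard] at h0
      refine ⟨h0.1.trans ?_, by omega, by omega⟩
      exact Finset.Icc_subset_Icc (by omega) le_rfl
    · rw [mem_filter, mem_powersetCard] at h1
      exact ⟨h1.1.1, by omega, by omega⟩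
    · rw [mem_filter, mem_powersetCard] at h2
      exact ⟨h2.1.1, by omega, by omega⟩
    · rw [mem_image] at hr
      obtain ⟨B, hB, rfl⟩ := hr
      obtain ⟨hBsub, hBlo, hBhi⟩ := ih (k+1) n (by omega) B hB
      have hbB : 2*k+2 ∉ B := by
        intro hc
        have := hBsub hc
        rw [Finset.mem_Icc] at this
        omega
      have hcard : (insert (2*k+2) B).card = B.card + 1 := Finset.card_insert_of_notMem hbB
      refine ⟨?_, by omega, by omega⟩
      intro x hx
      rw [Finset.mem_insert] at hx
      rcases hx with rfl | hx
      · rw [Finset.mem_Icc]; omega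
      · have := hBsub hx
        rw [Finset.mem_Icc] at this ⊢
        omega

lemma cutAux_cutset : ∀ m k n, ∀ f : ℕ → Finset ℕ,
    (∀ i, m ≤ i → i ≤ m + 2 → f i ⊆ Finset.Icc (2*k+1) n ∧ (f i).card = i) →
    (∀ i, m ≤ i → i < m + 2 → f i ⊆ f (i + 1)) →
    ∃ i, m ≤ i ∧ i ≤ m + 2 ∧ f i ∈ cutAux m n k := by
  intro m
  induction m with
  | zero =>
    intro k n f hf _
    refine ⟨0, le_rfl, by omega, ?_⟩
    have h0 : (f 0).card = 0 := (hf 0 le_rfl (by omega)).2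
    have : f 0 = ∅ := Finset.card_eq_zero.mp h0
    simp [cutAux, this]
  | succ m ih =>
    intro k n f hf hmono
    set a := 2*k+1 with ha'
    set b := 2*k+2 with hb'
    have h12 : f (m+1) ⊆ f (m+2) := hmono (m+1) le_rfl (by omega)
    have h23 : f (m+2) ⊆ f (m+3) := hmono (m+2) (by omega) (by omega)
    by_cases hA : a ∈ f (m+1)
    · by_cases hb : b ∈ f (m+2)
      · refine ⟨m+3, by omega, by omega, ?_⟩
        simp only [cutAux, mem_union]
        refine Or.inl (Or.inr ?_)
        rw [mem_filter, mem_powersetCard]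
        exact ⟨⟨(hf (m+3) (by omega) (by omega)).1, (hf (m+3) (by omega) (by omega)).2⟩,
          h23 (h12 hA), h23 hb⟩
      · refine ⟨m+2, by omega, by omega, ?_⟩
        simp only [cutAux, mem_union]
        refine Or.inl (Or.inl (Or.inr ?_))
        rw [mem_filter, mem_powersetCard]
        exact ⟨⟨(hf (m+2) (by omega) (by omega)).1, (hf (m+2) (by omega) (by omega)).2⟩,
          h12 hA, hb⟩
    · by_cases hb : b ∈ f (m+1)
      · by_cases ha3 : a ∈ f (m+3)
        · refine ⟨m+3, by omega, by omega, ?_⟩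
          simp only [cutAux, mem_union]
          refine Or.inl (Or.inr ?_)
          rw [mem_filter, mem_powersetCard]
          exact ⟨⟨(hf (m+3) (by omega) (by omega)).1, (hf (m+3) (by omega) (by omega)).2⟩,
            ha3, h23 (h12 hb)⟩
        · -- recursive case: chain contains b from level m+1 on, avoids a entirely
          have hbin : ∀ i, m ≤ i → i ≤ m+2 → b ∈ f (i+1) := by
            intro i hi hi2
            have hcases : i = m ∨ i = m+1 ∨ i = m+2 := by omega
            rcases hcases with rfl | rfl | rfl
            · exact hb
            · exact h12 hb
            · exact h23 (h12 hb)
          have hain : ∀ i, m ≤ i → i ≤ m+2 → a ∉ f (i+1) := by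
            intro i hi hi2 hc
            apply ha3
            have hcases : i = m ∨ i = m+1 ∨ i = m+2 := by omega
            rcases hcases with rfl | rfl | rfl
            · exact h23 (h12 hc)
            · exact h23 hc
            · exact hc
          have hchain : ∀ i, m ≤ i → i ≤ m + 2 →
              (f (i+1)).erase b ⊆ Finset.Icc (2*(k+1)+1) n ∧ ((f (i+1)).erase b).card = i := by
            intro i hi hi2
            have hsub := (hf (i+1) (by omega) (by omega)).1
            have hcard := (hf (i+1) (by omega) (by omega)).2
            constructor
            · intro x hx
              have hxb : x ≠ b := Finset.ne_of_mem_erase hx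
              have hxf : x ∈ f (i+1) := Finset.mem_of_mem_erase hx
              have hxa : x ≠ a := by rintro rfl; exact hain i hi hi2 hxf
              have := hsub hxf
              rw [Finset.mem_Icc] at this ⊢
              omega
            · rw [Finset.card_erase_of_mem (hbin i hi hi2), hcard]
              omega
          have hmono' : ∀ i, m ≤ i → i < m + 2 →
              (f (i+1)).erase b ⊆ (f (i+1+1)).erase b := by
            intro i hi hi2
            exact Finset.erase_subset_erase b (hmono (i+1) (by omega) (by omega))
          obtain ⟨i, hi1, hi2, hi3⟩ := ih (k+1) n (fun i => (f (i+1)).erase b) hchain hmono'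
          refine ⟨i+1, by omega, by omega, ?_⟩
          simp only [cutAux, mem_union]
          refine Or.inr ?_
          rw [mem_image]
          refine ⟨(f (i+1)).erase b, hi3, ?_⟩
          exact Finset.insert_erase (hbin i hi1 hi2)
      · refine ⟨m+1, le_rfl, by omega, ?_⟩
        simp only [cutAux, mem_union]
        refine Or.inl (Or.inl (Or.inl ?_))
        rw [mem_powersetCard]
        refine ⟨?_, (hf (m+1) le_rfl (by omega)).2⟩
        intro x hx
        have := (hf (m+1) le_rfl (by omega)).1 hx
        rw [Finset.mem_Icc] at this ⊢
        have hxa : x ≠ a := by rintro rfl; exact hA hx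
        have hxb : x ≠ b := by rintro rfl; exact hb hx
        omega

lemma cutAux_width : ∀ m k n, 2*k + 2*m + 2 ≤ n →
    widthF (cutAux m n k) ≤ ∑ j ∈ Finset.range (m + 1), (n - 2*(k+j) - 2).choose (m - j) := by
  intro m
  induction m with
  | zero =>
    intro k n _
    apply widthF_le_of
    intro T hT _
    have : T.card ≤ ({∅} : Finset (Finset ℕ)).card := Finset.card_le_card (by simpa [cutAux] using hT)
    simpa using this
  | succ m ih =>
    intro k n hn
    apply widthF_le_of
    intro T hT hanti
    set a := 2*k+1 with ha'
    set b := 2*k+2 with hb'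
    set X : Finset (Finset ℕ) :=
      (Finset.Icc (2*k+3) n).powersetCard (m+1) ∪
      ((Finset.Icc (2*k+1) n).powersetCard (m+2)).filter
        (fun A => 2*k+1 ∈ A ∧ 2*k+2 ∉ A) ∪
      ((Finset.Icc (2*k+1) n).powersetCard (m+3)).filter
        (fun A => 2*k+1 ∈ A ∧ 2*k+2 ∈ A) with hX
    have hTsub : ∀ A ∈ T, A ∈ X ∨ A ∈ (cutAux m n (k+1)).image (insert b) := by
      intro A hA
      have := hT hA
      simp only [cutAux, mem_union, hX] at this ⊢
      tauto
    -- split T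
    have hsplit : T.card = (T.filter (· ∈ X)).card + (T.filter (· ∉ X)).card :=
      (Finset.card_filter_add_card_filter_not _).symm
    -- bound for the part inside X
    have hX_mem : ∀ A ∈ X, (A \ {a, b}).card = m + 1 ∧ A \ {a, b} ⊆ Finset.Icc (2*k+3) n ∧
        (A ∩ {a, b} = ∅ ∨ A ∩ {a, b} = {a} ∨ A ∩ {a, b} = {a, b}) := by
      intro A hA
      simp only [hX, mem_union, mem_filter, mem_powersetCard] at hA
      have hab : a ≠ b := by omega
      rcases hA with (⟨hsub, hcard⟩ | ⟨⟨hsub, hcard⟩, haA, hbA⟩) | ⟨⟨hsub, hcard⟩, haA, hbA⟩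
      · have haA : a ∉ A := fun hc => by have := hsub hc; rw [Finset.mem_Icc] at this; omega
        have hbA : b ∉ A := fun hc => by have := hsub hc; rw [Finset.mem_Icc] at this; omega
        have hinter : A ∩ {a, b} = ∅ := by
          ext x; simp only [Finset.mem_inter, Finset.mem_insert, Finset.mem_singleton,
            Finset.notMem_empty, iff_false]
          rintro ⟨hx, rfl | rfl⟩ <;> [exact haA hx; exact hbA hx]
        have hsdiff : A \ {a, b} = A := by
          rw [Finset.sdiff_eq_self_iff_disjoint, Finset.disjoint_left]
          intro x hx
          simp only [Finset.mem_insert, Finset.mem_singleton]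
          rintro (rfl | rfl) <;> [exact haA hx; exact hbA hx]
        rw [hsdiff]
        exact ⟨hcard, hsub, Or.inl hinter⟩
      · have hinter : A ∩ {a, b} = {a} := by
          ext x; simp only [Finset.mem_inter, Finset.mem_insert, Finset.mem_singleton]
          constructor
          · rintro ⟨hx, hx2⟩
            rcases hx2 with h | h
            · exact h
            · exact absurd (by rwa [h] at hx) hbA
          · rintro rfl; exact ⟨haA, Or.inl rfl⟩
        refine ⟨?_, ?_, Or.inr (Or.inl hinter)⟩
        · have := Finset.card_sdiff_add_card_inter A ({a, b} : Finset ℕ)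
          rw [hinter] at this
          simp only [Finset.card_singleton] at this
          omega
        · intro x hx
          rw [Finset.mem_sdiff] at hx
          have := hsub hx.1
          rw [Finset.mem_Icc] at this ⊢
          simp only [Finset.mem_insert, Finset.mem_singleton, not_or] at hx
          omega
      · have hinter : A ∩ {a, b} = {a, b} := by
          rw [Finset.inter_eq_right]
          intro x hx
          simp only [Finset.mem_insert, Finset.mem_singleton] at hx
          rcases hx with rfl | rfl <;> assumption
        refine ⟨?_, ?_, Or.inr (Or.inr hinter)⟩
        · have := Finset.card_sdiff_add_card_inter A ({a, b} : Finset ℕ)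
          rw [hinter] at this
          have h2 : ({a, b} : Finset ℕ).card = 2 := by
            rw [Finset.card_insert_of_notMem (by simp [hab]), Finset.card_singleton]
          omega
        · intro x hx
          rw [Finset.mem_sdiff] at hx
          have := hsub hx.1
          rw [Finset.mem_Icc] at this ⊢
          simp only [Finset.mem_insert, Finset.mem_singleton, not_or] at hx
          omega
    have hbound1 : (T.filter (· ∈ X)).card ≤ (n - 2*k - 2).choose (m+1) := by
      have hinj : Set.InjOn (fun A => A \ ({a, b} : Finset ℕ)) ↑(T.filter (· ∈ X)) := by
        intro A hA A' hA' heq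
        simp only [Finset.coe_filter, Set.mem_setOf_eq] at hA hA'
        by_contra hne
        obtain ⟨_, _, hi⟩ := hX_mem A hA.2
        obtain ⟨_, _, hi'⟩ := hX_mem A' hA'.2
        have hrec : A = (A \ {a,b}) ∪ (A ∩ {a,b}) := by
          rw [Finset.sdiff_union_inter]
        have hrec' : A' = (A' \ {a,b}) ∪ (A' ∩ {a,b}) := by
          rw [Finset.sdiff_union_inter]
        have heq' : A \ ({a, b} : Finset ℕ) = A' \ ({a, b} : Finset ℕ) := heq
        have hcomp : A ⊆ A' ∨ A' ⊆ A := by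
          have hsub1 : A ∩ {a,b} ⊆ A' ∩ {a,b} ∨ A' ∩ {a,b} ⊆ A ∩ {a,b} := by
            rcases hi with h|h|h <;> rcases hi' with h'|h'|h' <;>
              rw [h, h'] <;> simp [Finset.insert_subset_iff, Finset.subset_insert]
          rcases hsub1 with hs | hs
          · left
            rw [hrec, hrec', heq']
            exact Finset.union_subset_union_right hs
          · right
            rw [hrec, hrec', heq']
            exact Finset.union_subset_union_right hs
        rcases hcomp with hc | hc
        · exact hanti (Finset.mem_coe.mpr hA.1) (Finset.mem_coe.mpr hA'.1) hne hc
        · exact hanti (Finset.mem_coe.mpr hA'.1) (Finset.mem_coe.mpr hA.1) (Ne.symm hne) hc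
      have himg : (T.filter (· ∈ X)).image (fun A => A \ ({a, b} : Finset ℕ)) ⊆
          (Finset.Icc (2*k+3) n).powersetCard (m+1) := by
        intro B hB
        rw [mem_image] at hB
        obtain ⟨A, hA, rfl⟩ := hB
        rw [mem_filter] at hA
        obtain ⟨hc, hs, _⟩ := hX_mem A hA.2
        rw [mem_powersetCard]
        exact ⟨hs, hc⟩
      calc (T.filter (· ∈ X)).card
          = ((T.filter (· ∈ X)).image (fun A => A \ ({a, b} : Finset ℕ))).card :=
            (Finset.card_image_of_injOn hinj).symm
        _ ≤ ((Finset.Icc (2*k+3) n).powersetCard (m+1)).card := Finset.card_le_card himg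
        _ = (n - 2*k - 2).choose (m+1) := by
            rw [Finset.card_powersetCard, Nat.card_Icc]
            congr 1
            omega
    -- bound for the recursive part
    have hbound2 : (T.filter (· ∉ X)).card ≤
        ∑ j ∈ Finset.range (m + 1), (n - 2*((k+1)+j) - 2).choose (m - j) := by
      have hmem : ∀ A ∈ T.filter (· ∉ X), b ∈ A ∧ A.erase b ∈ cutAux m n (k+1) := by
        intro A hA
        rw [mem_filter] at hA
        rcases hTsub A hA.1 with hx | hx
        · exact absurd hx hA.2
        · rw [mem_image] at hx
          obtain ⟨B, hB, rfl⟩ := hx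
          have hbB : b ∉ B := by
            intro hc
            have := (cutAux_mem_bounds m (k+1) n (by omega) B hB).1 hc
            rw [Finset.mem_Icc] at this
            omega
          rw [Finset.erase_insert hbB]
          exact ⟨Finset.mem_insert_self _ _, hB⟩
      have hinj : Set.InjOn (fun A => Finset.erase A b) ↑(T.filter (· ∉ X)) := by
        intro A hA A' hA' heq
        simp only [Finset.coe_filter, Set.mem_setOf_eq] at hA hA'
        have h1 := (hmem A (mem_filter.mpr hA)).1
        have h2 := (hmem A' (mem_filter.mpr hA')).1
        have heq' : A.erase b = A'.erase b := heq
        rw [← Finset.insert_erase h1, ← Finset.insert_erase h2, heq']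
      set T' := (T.filter (· ∉ X)).image (fun A => Finset.erase A b) with hT'
      have hT'sub : T' ⊆ cutAux m n (k+1) := by
        intro B hB
        rw [hT', mem_image] at hB
        obtain ⟨A, hA, rfl⟩ := hB
        exact (hmem A hA).2
      have hT'anti : IsAntichain (· ⊆ ·) (T' : Set (Finset ℕ)) := by
        intro B hB B' hB' hne hsub
        simp only [hT', Finset.coe_image, Set.mem_image, Finset.mem_coe] at hB hB'
        obtain ⟨A, hA, rfl⟩ := hB
        obtain ⟨A', hA', rfl⟩ := hB'
        have h1 := (hmem A hA).1
        have h2 := (hmem A' hA').1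
        have hAA' : A ⊆ A' := by
          rw [← Finset.insert_erase h1, ← Finset.insert_erase h2]
          exact Finset.insert_subset_insert _ hsub
        have hne2 : A ≠ A' := fun hc => hne (by rw [hc])
        exact hanti (Finset.mem_coe.mpr (Finset.filter_subset _ _ hA))
          (Finset.mem_coe.mpr (Finset.filter_subset _ _ hA')) hne2 hAA'
      calc (T.filter (· ∉ X)).card = T'.card := (Finset.card_image_of_injOn hinj).symm
        _ ≤ widthF (cutAux m n (k+1)) := le_widthF_s9 hT'sub hT'anti
        _ ≤ _ := ih (k+1) n (by omega)
    rw [hsplit]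
    have hsum : ∑ j ∈ Finset.range (m + 2), (n - 2*(k+j) - 2).choose (m + 1 - j) =
        (n - 2*k - 2).choose (m+1) +
        ∑ j ∈ Finset.range (m + 1), (n - 2*((k+1)+j) - 2).choose (m - j) := by
      have e1 : ∀ j, (n - 2*(k+(j+1)) - 2).choose (m + 1 - (j+1)) =
          (n - 2*((k+1)+j) - 2).choose (m - j) := by
        intro j
        have ha : n - 2*(k+(j+1)) - 2 = n - 2*((k+1)+j) - 2 := by omega
        have hb : m + 1 - (j+1) = m - j := by omega
        rw [ha, hb]
      have e0 : (n - 2*(k+0) - 2).choose (m + 1 - 0) = (n - 2*k - 2).choose (m+1) := by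
        norm_num
      rw [Finset.sum_range_succ', e0, Finset.sum_congr rfl (fun j _ => e1 j), Nat.add_comm]
    rw [hsum]
    exact Nat.add_le_add hbound1 hbound2

theorem stmt_9 (n m : ℕ) (h : 2 * m + 2 ≤ n) :
    hFun n m (m + 2) ≤ ∑ j ∈ Finset.range (m + 1), (n - 2 * j - 2).choose (m - j) := by
  have hcut : IsCutset n m (m + 2) (cutAux m n 0) := by
    constructor
    · intro A hA
      obtain ⟨hsub, hlo, hhi⟩ := cutAux_mem_bounds m 0 n (by omega) A hA
      rw [truncBool, mem_filter, mem_powerset]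
      exact ⟨hsub.trans (Finset.Icc_subset_Icc (by omega) le_rfl), hlo, hhi⟩
    · intro f hf hmono
      exact cutAux_cutset m 0 n f (by simpa using hf) hmono
  have hmem : widthF (cutAux m n 0) ∈
      {w | ∃ C : Finset (Finset ℕ), IsCutset n m (m+2) C ∧ widthF C = w} :=
    ⟨cutAux m n 0, hcut, rfl⟩
  have h1 : hFun n m (m + 2) ≤ widthF (cutAux m n 0) := Nat.sInf_le hmem
  have h2 := cutAux_width m 0 n (by omega)
  calc hFun n m (m + 2) ≤ widthF (cutAux m n 0) := h1
    _ ≤ ∑ j ∈ Finset.range (m + 1), (n - 2*(0+j) - 2).choose (m - j) := h2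
    _ = ∑ j ∈ Finset.range (m + 1), (n - 2*j - 2).choose (m - j) := by
        apply Finset.sum_congr rfl
        intro j _
        congr 2
        omega
end

section
/- For nonnegative integers n, m, l with 2m ≤ l ≤ n−m, every cutset of B_n(m, 2m) extends to a cutset of B_n(m, l) of the same width; hence h_n(m, l) ≤ h_n(m, 2m). -/
open Finset
open scoped Classical

theorem stmt_14 (n m l : ℕ) (h1 : 2 * m ≤ l) (h2 : l ≤ n - m) :
    (∀ C : Finset (Finset ℕ), IsCutset n m (2 * m) C → IsCutset n m l C) ∧
    hFun n m l ≤ hFun n m (2 * m) := by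
  have key : ∀ C : Finset (Finset ℕ), IsCutset n m (2 * m) C → IsCutset n m l C := by
    intro C hC
    obtain ⟨hsub, hchain⟩ := hC
    constructor
    · intro A hA
      have := hsub hA
      simp only [truncBool, Finset.mem_filter, Finset.mem_powerset] at this ⊢
      exact ⟨this.1, this.2.1, this.2.2.trans h1⟩
    · intro f hf hmono
      obtain ⟨i, hi1, hi2, hi3⟩ := hchain f
        (fun i h1' h2' => hf i h1' (h2'.trans h1))
        (fun i h1' h2' => hmono i h1' (lt_of_lt_of_le h2' h1))
      exact ⟨i, hi1, hi2.trans h1, hi3⟩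
  refine ⟨key, ?_⟩
  have hne : {w | ∃ C : Finset (Finset ℕ), IsCutset n m (2 * m) C ∧ widthF C = w}.Nonempty := by
    refine ⟨widthF (truncBool n m (2 * m)), truncBool n m (2 * m), ⟨le_rfl, ?_⟩, rfl⟩
    intro f hf _
    refine ⟨m, le_rfl, by omega, ?_⟩
    obtain ⟨hs, hc⟩ := hf m le_rfl (by omega)
    simp only [truncBool, Finset.mem_filter, Finset.mem_powerset]
    exact ⟨hs, by omega⟩
  have hmem := Nat.sInf_mem hne
  obtain ⟨C, hC, hw⟩ := hmem
  exact Nat.sInf_le ⟨C, key C hC, hw⟩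
end

section
/- In a symmetric chain decomposition of 2^{[k]} constructed by de Bruijn's recursion, if A_1 ⊂ ... ⊂ A_r and B_1 ⊂ ... ⊂ B_s are two chains and A_i ⊆ B_j for some indices i, j, then i ≤ j. -/
/-- One step of de Bruijn's recursion: from a chain `A₁ ⊂ ⋯ ⊂ A_r` of `2^{[k]}`
(listed bottom to top) form the chain `A₁ ⊂ ⋯ ⊂ A_r ⊂ A_r ∪ {k+1}` and, if `r ≥ 2`,
the chain `A₁ ∪ {k+1} ⊂ ⋯ ⊂ A_{r-1} ∪ {k+1}`. -/
def dbStep (k : ℕ) (ch : List (Finset ℕ)) : List (List (Finset ℕ)) :=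
  (ch ++ [insert (k + 1) ch.getLast!]) ::
    (if ch.length ≤ 1 then [] else [ch.dropLast.map (insert (k + 1))])

/-- `DeBruijn k P` : `P` is the symmetric chain decomposition of `2^{[k]}`
produced by de Bruijn's recursion (chains listed bottom to top). -/
inductive DeBruijn : ℕ → List (List (Finset ℕ)) → Prop
  | base : DeBruijn 0 [[∅]]
  | step (k : ℕ) (P : List (List (Finset ℕ))) :
      DeBruijn k P → DeBruijn (k + 1) (P.flatMap (dbStep k))

lemma mem_dbStep {k : ℕ} {ch c : List (Finset ℕ)} (h : c ∈ dbStep k ch) :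
    c = ch ++ [insert (k + 1) ch.getLast!] ∨
      (2 ≤ ch.length ∧ c = ch.dropLast.map (insert (k + 1))) := by
  unfold dbStep at h
  rcases List.mem_cons.mp h with h | h
  · exact Or.inl h
  · split at h
    · simp at h
    · next hlen =>
        simp only [List.mem_singleton] at h
        exact Or.inr ⟨by omega, h⟩

lemma append_single_getElem? {α : Type*} {l : List α} {y : α} {i : ℕ} {A : α}
    (h : (l ++ [y])[i]? = some A) :
    (i < l.length ∧ l[i]? = some A) ∨ (i = l.length ∧ A = y) := by
  rcases lt_trichotomy i l.length with hi | hi | hi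
  · left; refine ⟨hi, ?_⟩; rwa [List.getElem?_append, if_pos hi] at h
  · right; refine ⟨hi, ?_⟩
    rw [List.getElem?_append, if_neg (by omega), hi] at h
    simp at h; exact h.symm
  · exfalso
    have h2 := (List.getElem?_eq_some_iff.mp h).1
    rw [List.length_append, List.length_singleton] at h2
    omega

lemma dropLast_map_getElem? {l : List (Finset ℕ)} {f : Finset ℕ → Finset ℕ} {i : ℕ}
    {A : Finset ℕ} (h : (l.dropLast.map f)[i]? = some A) :
    i + 1 < l.length ∧ ∃ A₀, l[i]? = some A₀ ∧ A = f A₀ := by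
  rw [List.getElem?_map] at h
  rcases Option.map_eq_some_iff.mp h with ⟨A₀, h₀, rfl⟩
  have hi : i < l.length - 1 := by
    have := List.getElem?_eq_some_iff.mp h₀
    simpa [List.length_dropLast] using this.1
  rw [List.getElem?_dropLast, if_pos hi] at h₀
  exact ⟨by omega, A₀, h₀, rfl⟩

lemma getLast!_getElem? {l : List (Finset ℕ)} (h : l ≠ []) :
    l[l.length - 1]? = some l.getLast! := by
  have h1 : l.getLast! = l.getLast h := by
    cases l with
    | nil => simp at h
    | cons a as => rfl
  rw [h1, List.getLast_eq_getElem, List.getElem?_eq_getElem]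

lemma dbGood {k : ℕ} {P : List (List (Finset ℕ))} (hP : DeBruijn k P) :
    (∀ ch ∈ P, ch ≠ [] ∧ (∀ S ∈ ch, ∀ x ∈ S, x ≤ k) ∧
      (∀ (i : ℕ) (A : Finset ℕ), ch[i]? = some A → 2 * A.card + ch.length = 2 * i + k + 1)) ∧
    (∀ ch₁ ∈ P, ∀ ch₂ ∈ P, ∀ (i j : ℕ) (A B : Finset ℕ),
      ch₁[i]? = some A → ch₂[j]? = some B → A ⊆ B → i ≤ j) := by
  induction hP with
  | base =>
    constructor
    · rintro ch hch
      simp only [List.mem_singleton] at hch; subst hch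
      refine ⟨by simp, by simp, ?_⟩
      intro i A hA
      obtain ⟨hi, hA'⟩ := List.getElem?_eq_some_iff.mp hA
      simp only [List.length_singleton] at hi
      interval_cases i
      simp at hA'; subst hA'; simp
    · intro ch₁ hch₁ ch₂ hch₂ i j A B hA hB hAB
      simp only [List.mem_singleton] at hch₁; subst hch₁
      obtain ⟨hi, -⟩ := List.getElem?_eq_some_iff.mp hA
      simp only [List.length_singleton] at hi
      omega
  | step k P hP ih =>
    obtain ⟨ih1, ih2⟩ := ih
    have hnm : ∀ ch ∈ P, ∀ (ii : ℕ) (S : Finset ℕ), ch[ii]? = some S → (k + 1) ∉ S := by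
      intro ch hch ii S hS hm
      have := (ih1 ch hch).2.1 S (List.mem_of_getElem? hS) _ hm
      omega
    constructor
    · intro c hc
      rcases List.mem_flatMap.mp hc with ⟨ch, hch, hstep⟩
      obtain ⟨hne, hbd, hcard⟩ := ih1 ch hch
      have hlen1 : 1 ≤ ch.length := List.length_pos_iff.mpr hne
      rcases mem_dbStep hstep with rfl | ⟨hlen2, rfl⟩
      · refine ⟨by simp, ?_, ?_⟩
        · intro S hS x hx
          rcases List.mem_append.mp hS with hS | hS
          · exact le_trans (hbd S hS x hx) (Nat.le_succ k)
          · simp only [List.mem_singleton] at hS; subst hS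
            rcases Finset.mem_insert.mp hx with rfl | hx
            · exact le_rfl
            · have hmem : ch.getLast! ∈ ch := List.mem_of_getElem? (getLast!_getElem? hne)
              exact le_trans (hbd _ hmem x hx) (Nat.le_succ k)
        · intro i A hA
          rcases append_single_getElem? hA with ⟨hi, hA'⟩ | ⟨rfl, rfl⟩
          · have := hcard i A hA'
            simp only [List.length_append, List.length_singleton]
            omega
          · have hL := hcard (ch.length - 1) _ (getLast!_getElem? hne)
            have hnm' : (k + 1) ∉ ch.getLast! := hnm ch hch _ _ (getLast!_getElem? hne)
            rw [Finset.card_insert_of_notMem hnm']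
            simp only [List.length_append, List.length_singleton]
            omega
      · refine ⟨?_, ?_, ?_⟩
        · intro hnil
          apply_fun List.length at hnil
          simp only [List.length_map, List.length_dropLast, List.length_nil] at hnil
          omega
        · intro S hS x hx
          rcases List.mem_map.mp hS with ⟨S₀, hS₀, rfl⟩
          have hS₀' : S₀ ∈ ch := List.dropLast_subset _ hS₀
          rcases Finset.mem_insert.mp hx with rfl | hx
          · exact le_rfl
          · exact le_trans (hbd _ hS₀' x hx) (Nat.le_succ k)
        · intro i A hA
          obtain ⟨hi, A₀, hA₀, rfl⟩ := dropLast_map_getElem? hA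
          have hnm' : (k + 1) ∉ A₀ := hnm ch hch _ _ hA₀
          have := hcard i A₀ hA₀
          rw [Finset.card_insert_of_notMem hnm']
          simp only [List.length_map, List.length_dropLast]
          omega
    · intro c₁ hc₁ c₂ hc₂ i j A B hA hB hAB
      rcases List.mem_flatMap.mp hc₁ with ⟨ch₁, hch₁, hs₁⟩
      rcases List.mem_flatMap.mp hc₂ with ⟨ch₂, hch₂, hs₂⟩
      obtain ⟨hne₁, hbd₁, hcard₁⟩ := ih1 ch₁ hch₁
      obtain ⟨hne₂, hbd₂, hcard₂⟩ := ih1 ch₂ hch₂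
      have hl₁ : 1 ≤ ch₁.length := List.length_pos_iff.mpr hne₁
      have hl₂ : 1 ≤ ch₂.length := List.length_pos_iff.mpr hne₂
      have hgl₁ := getLast!_getElem? hne₁
      have hgl₂ := getLast!_getElem? hne₂
      rcases mem_dbStep hs₁ with rfl | ⟨hlen₁, rfl⟩ <;>
        rcases mem_dbStep hs₂ with rfl | ⟨hlen₂, rfl⟩
      · -- T1 / T1
        rcases append_single_getElem? hA with ⟨hi, hA'⟩ | ⟨rfl, rfl⟩ <;>
          rcases append_single_getElem? hB with ⟨hj, hB'⟩ | ⟨rfl, rfl⟩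
        · exact ih2 ch₁ hch₁ ch₂ hch₂ i j A B hA' hB' hAB
        · have hnmA : (k + 1) ∉ A := hnm ch₁ hch₁ _ _ hA'
          have hsub : A ⊆ ch₂.getLast! :=
            (Finset.subset_insert_iff_of_notMem hnmA).mp hAB
          have := ih2 ch₁ hch₁ ch₂ hch₂ i (ch₂.length - 1) A _ hA' hgl₂ hsub
          omega
        · exact absurd (hAB (Finset.mem_insert_self _ _))
            (hnm ch₂ hch₂ _ _ hB')
        · have hnmL : (k + 1) ∉ ch₁.getLast! := hnm ch₁ hch₁ _ _ hgl₁
          have hsub : ch₁.getLast! ⊆ ch₂.getLast! :=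
            (Finset.subset_insert_iff_of_notMem hnmL).mp
              ((Finset.subset_insert _ _).trans hAB)
          have := ih2 ch₁ hch₁ ch₂ hch₂ (ch₁.length - 1) (ch₂.length - 1) _ _ hgl₁ hgl₂ hsub
          omega
      · -- T1 / T2
        obtain ⟨hj, B₀, hB₀, rfl⟩ := dropLast_map_getElem? hB
        rcases append_single_getElem? hA with ⟨hi, hA'⟩ | ⟨rfl, rfl⟩
        · have hnmA : (k + 1) ∉ A := hnm ch₁ hch₁ _ _ hA'
          have hsub : A ⊆ B₀ := (Finset.subset_insert_iff_of_notMem hnmA).mp hAB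
          exact ih2 ch₁ hch₁ ch₂ hch₂ i j A B₀ hA' hB₀ hsub
        · have hnmL : (k + 1) ∉ ch₁.getLast! := hnm ch₁ hch₁ _ _ hgl₁
          have hsub : ch₁.getLast! ⊆ B₀ :=
            (Finset.subset_insert_iff_of_notMem hnmL).mp
              ((Finset.subset_insert _ _).trans hAB)
          have hc1 := hcard₁ (ch₁.length - 1) _ hgl₁
          have hc2 := hcard₂ j B₀ hB₀
          have hcle : ch₁.getLast!.card ≤ B₀.card := Finset.card_le_card hsub
          omega
      · -- T2 / T1
        obtain ⟨hi, A₀, hA₀, rfl⟩ := dropLast_map_getElem? hA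
        rcases append_single_getElem? hB with ⟨hj, hB'⟩ | ⟨rfl, rfl⟩
        · exact absurd (hAB (Finset.mem_insert_self _ _))
            (hnm ch₂ hch₂ _ _ hB')
        · have hnmA : (k + 1) ∉ A₀ := hnm ch₁ hch₁ _ _ hA₀
          have hsub : A₀ ⊆ ch₂.getLast! :=
            (Finset.subset_insert_iff_of_notMem hnmA).mp
              ((Finset.subset_insert _ _).trans hAB)
          have := ih2 ch₁ hch₁ ch₂ hch₂ i (ch₂.length - 1) _ _ hA₀ hgl₂ hsub
          omega
      · -- T2 / T2
        obtain ⟨hi, A₀, hA₀, rfl⟩ := dropLast_map_getElem? hA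
        obtain ⟨hj, B₀, hB₀, rfl⟩ := dropLast_map_getElem? hB
        have hnmA : (k + 1) ∉ A₀ := hnm ch₁ hch₁ _ _ hA₀
        have hsub : A₀ ⊆ B₀ :=
          (Finset.subset_insert_iff_of_notMem hnmA).mp
            ((Finset.subset_insert _ _).trans hAB)
        exact ih2 ch₁ hch₁ ch₂ hch₂ i j A₀ B₀ hA₀ hB₀ hsub

theorem stmt_17 (k : ℕ) (P : List (List (Finset ℕ))) (hP : DeBruijn k P)
    (ch₁ ch₂ : List (Finset ℕ)) (h₁ : ch₁ ∈ P) (h₂ : ch₂ ∈ P)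
    (i j : ℕ) (A B : Finset ℕ)
    (hA : ch₁[i]? = some A) (hB : ch₂[j]? = some B) (hAB : A ⊆ B) :
    i ≤ j :=
  (dbGood hP).2 ch₁ h₁ ch₂ h₂ i j A B hA hB hAB
end
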